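/- Let p be a prime and m ≥ 2 a natural number with p ∣ m. Then for every s with 2 ≤ s ≤ m, one has (p − 1) · padicValRat p ((m.choose s : ℚ) / m) ≥ −(s − 1) (i.e., ord_p(C(m,s)/m)/(s−1) ≥ −1/(p−1)), and equality holds at s = p: padicValRat p ((m.choose p : ℚ) / m) = −1. In other words, min_{2 ≤ s ≤ m} ord_p(C(m,s)/m)/(s−1) = −1/(p−1), attained at s = p. -/

import Mathlib

-- key multiplicative identity on valuations
lemma val_identity (p m s : ℕ) (hp : p.Prime) (hm : 1 ≤ m) (hs : 1 ≤ s) (hsm : s ≤ m) :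
    padicValNat p m + padicValNat p ((m-1).choose (s-1)) =
      padicValNat p s + padicValNat p (m.choose s) := by
  haveI : Fact p.Prime := ⟨hp⟩
  have hid : m * (m-1).choose (s-1) = m.choose s * s := by
    have h := Nat.add_one_mul_choose_eq (m-1) (s-1)
    have e1 : m - 1 + 1 = m := by omega
    have e2 : s - 1 + 1 = s := by omega
    rwa [e1, e2] at h
  have h1 : m ≠ 0 := by omega
  have h2 : (m-1).choose (s-1) ≠ 0 := (Nat.choose_pos (by omega)).ne'
  have h3 : m.choose s ≠ 0 := (Nat.choose_pos hsm).ne'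
  have h4 : s ≠ 0 := by omega
  calc padicValNat p m + padicValNat p ((m-1).choose (s-1))
      = padicValNat p (m * (m-1).choose (s-1)) := (padicValNat.mul h1 h2).symm
    _ = padicValNat p (m.choose s * s) := by rw [hid]
    _ = padicValNat p s + padicValNat p (m.choose s) := by
        rw [padicValNat.mul h3 h4, add_comm]

lemma val_le (p s : ℕ) (hp : p.Prime) (hs : 1 ≤ s) :
    ((p : ℤ) - 1) * padicValNat p s ≤ (s : ℤ) - 1 := by
  haveI : Fact p.Prime := ⟨hp⟩
  set k := padicValNat p s with hk
  have hdvd : p ^ k ∣ s := pow_padicValNat_dvd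
  have hle : p ^ k ≤ s := Nat.le_of_dvd (by omega) hdvd
  have hb := one_add_mul_le_pow (a := (p:ℤ) - 1)
    (by have := hp.two_le; omega) k
  have : ((p:ℤ)) ^ k ≤ (s : ℤ) := by exact_mod_cast hle
  have hpk : ((1:ℤ) + ((p:ℤ) - 1)) ^ k = (p:ℤ)^k := by ring_nf
  rw [hpk] at hb
  nlinarith [hb]

theorem stmt12 (p m : ℕ) (hp : p.Prime) (hm : 2 ≤ m) (hpm : p ∣ m) :
    (∀ s : ℕ, 2 ≤ s → s ≤ m →
        -((s : ℤ) - 1) ≤ ((p : ℤ) - 1) * padicValRat p ((m.choose s : ℚ) / (m : ℚ))) ∧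
      padicValRat p ((m.choose p : ℚ) / (m : ℚ)) = -1 := by
  haveI : Fact p.Prime := ⟨hp⟩
  have hm0 : (m : ℚ) ≠ 0 := by positivity
  have hval : ∀ s : ℕ, 1 ≤ s → s ≤ m →
      padicValRat p ((m.choose s : ℚ) / (m : ℚ)) =
        (padicValNat p (m.choose s) : ℤ) - padicValNat p m := by
    intro s hs hsm
    have hc : ((m.choose s : ℚ)) ≠ 0 := by
      exact_mod_cast (Nat.choose_pos hsm).ne'
    rw [padicValRat.div hc hm0, padicValRat.of_nat, padicValRat.of_nat]
  constructor
  · intro s hs2 hsm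
    rw [hval s (by omega) hsm]
    have hid := val_identity p m s hp (by omega) (by omega) hsm
    have hle := val_le p s hp (by omega)
    have hp1 : (1:ℤ) ≤ (p:ℤ) - 1 := by have := hp.two_le; push_cast; omega
    have key : (padicValNat p m : ℤ) ≤ padicValNat p s + padicValNat p (m.choose s) := by
      exact_mod_cast (by omega : padicValNat p m ≤ padicValNat p s + padicValNat p (m.choose s))
    nlinarith [hle, key]
  · -- equality at s = p
    have hpm' : p ≤ m := Nat.le_of_dvd (by omega) hpm
    obtain ⟨t, rfl⟩ := hpm
    have hp2 := hp.two_le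
    have ht : 1 ≤ t := by by_contra h; push_neg at h; interval_cases t <;> omega
    -- (m-1) % p = p - 1
    have hmod : (p * t - 1) % p = p - 1 := by
      obtain ⟨t', rfl⟩ : ∃ t', t = t' + 1 := ⟨t - 1, by omega⟩
      have h1 : p * (t' + 1) - 1 = p * t' + (p - 1) := by
        have : p * (t' + 1) = p * t' + p := by ring
        omega
      rw [h1, Nat.mul_add_mod]
      exact Nat.mod_eq_of_lt (by omega)
    -- C(m-1, p-1) ≡ 1 mod p
    have hlucas := Choose.choose_modEq_choose_mod_mul_choose_div_nat
      (n := p * t - 1) (k := p - 1) (p := p)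
    have hkmod : (p - 1) % p = p - 1 := Nat.mod_eq_of_lt (by omega)
    have hkdiv : (p - 1) / p = 0 := Nat.div_eq_of_lt (by omega)
    rw [hmod, hkmod, hkdiv, Nat.choose_self, Nat.choose_zero_right, one_mul] at hlucas
    have hnotdvd : ¬ p ∣ (p * t - 1).choose (p - 1) := by
      intro hdvd
      have h1 : (p * t - 1).choose (p - 1) % p = 1 % p := hlucas
      have h2 : 1 % p = 1 := Nat.mod_eq_of_lt (by omega)
      have h0 : (p * t - 1).choose (p - 1) % p = 0 := Nat.mod_eq_zero_of_dvd hdvd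
      omega
    have hzero : padicValNat p ((p * t - 1).choose (p - 1)) = 0 :=
      padicValNat.eq_zero_of_not_dvd hnotdvd
    have hid := val_identity p (p * t) p hp (by omega) (by omega) hpm'
    rw [hzero, padicValNat.self hp.one_lt] at hid
    rw [hval p (by omega) hpm']
    have h1 : 1 ≤ padicValNat p (p * t) := by omega
    have : padicValNat p (p * t) = padicValNat p ((p*t).choose p) + 1 := by omega
    rw [this]
    push_cast
    ring
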